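/- As r tends to +∞, η_min(r) converges to b_min := inf_{‖Z‖=1} Σ_{α∈Δ⁺} m(α)·|α(Z)| (the constant b_min(G/K) of Remark 1.1). -/
import Mathlib


open Filter Real

/-- Pointwise bounds for `t * cosh t / sinh t` when `t > 0`. -/
lemma aux_coth_bounds (t : ℝ) (ht : 0 < t) :
    t ≤ t * Real.cosh t / Real.sinh t ∧ t * Real.cosh t / Real.sinh t ≤ t + 1 := by
  have hs : 0 < Real.sinh t := Real.sinh_pos_iff.2 ht
  have hsc : Real.sinh t ≤ Real.cosh t := by
    have := Real.cosh_sub_sinh t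
    nlinarith [Real.exp_pos (-t)]
  constructor
  · rw [le_div_iff₀ hs]; nlinarith
  · rw [div_le_iff₀ hs, Real.sinh_eq, Real.cosh_eq]
    have h1 : Real.exp (2 * t) = Real.exp t * Real.exp t := by
      rw [two_mul, Real.exp_add]
    have h2 : Real.exp (-t) * Real.exp t = 1 := by
      rw [← Real.exp_add]; simp
    have h3 : 2 * t + 1 ≤ Real.exp (2 * t) := Real.add_one_le_exp (2 * t)
    nlinarith [Real.exp_pos t, Real.exp_pos (-t)]

/-- If two functions are pointwise `ε`-close and nonneg, their infima are `ε`-close. -/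
lemma aux_iInf_close {ι : Type*} [Nonempty ι] (f g : ι → ℝ)
    (hf0 : ∀ i, 0 ≤ f i) (hg0 : ∀ i, 0 ≤ g i) (ε : ℝ)
    (h : ∀ i, |g i - f i| ≤ ε) : |iInf g - iInf f| ≤ ε := by
  have bf : BddBelow (Set.range f) := ⟨0, by rintro _ ⟨i, rfl⟩; exact hf0 i⟩
  have bg : BddBelow (Set.range g) := ⟨0, by rintro _ ⟨i, rfl⟩; exact hg0 i⟩
  rw [abs_le]
  constructor
  · have h1 : ∀ i, iInf f ≤ g i + ε := fun i => by
      have hi := (h i); rw [abs_le] at hi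
      have := ciInf_le bf i; linarith [hi.1]
    have : iInf f - ε ≤ iInf g := le_ciInf fun i => by linarith [h1 i]
    linarith
  · have h1 : ∀ i, iInf g ≤ f i + ε := fun i => by
      have hi := (h i); rw [abs_le] at hi
      have := ciInf_le bg i; linarith [hi.2]
    have : iInf g - ε ≤ iInf f := le_ciInf fun i => by linarith [h1 i]
    linarith

/-- As `r → +∞`, `η_min(r)` converges to
`b_min = inf_{‖Z‖=1} Σ_{α∈Δ⁺} m(α)·|α(Z)|` (Remark 1.1). -/
theorem etaMin_tendsto_bMin_atTop
    (V : Type*) [NormedAddCommGroup V] [InnerProductSpace ℝ V]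
    [FiniteDimensional ℝ V] (hl : 2 ≤ Module.finrank ℝ V)
    (Δ : Finset (V →ₗ[ℝ] ℝ)) (hΔ : Δ.Nonempty) (hΔ0 : ∀ α ∈ Δ, α ≠ 0)
    (m : (V →ₗ[ℝ] ℝ) → ℝ) (hm : ∀ α ∈ Δ, 0 < m α)
    (G : ℝ → ℝ) (hG0 : G 0 = 1)
    (hG : ∀ x : ℝ, x ≠ 0 → G x = x * Real.cosh x / Real.sinh x)
    (ηmin : ℝ → ℝ)
    (hηmin : ∀ r : ℝ, 0 < r → ηmin r =
      ⨅ Z : {Z : V // ‖Z‖ = 1},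
        ((1 / r) * ∑ α ∈ Δ, m α * G (r * α Z) +
          ((Module.finrank ℝ V : ℝ) - 1) / r))
    (bmin : ℝ)
    (hbmin : bmin = ⨅ Z : {Z : V // ‖Z‖ = 1}, ∑ α ∈ Δ, m α * |α Z|) :
    Tendsto ηmin atTop (nhds bmin) := by
  -- bounds on G : |y| ≤ G y ≤ |y| + 1
  have hGb : ∀ y : ℝ, |y| ≤ G y ∧ G y ≤ |y| + 1 := by
    intro y
    rcases eq_or_ne y 0 with rfl | hy
    · simp [hG0]
    · rw [hG y hy]
      have key : y * Real.cosh y / Real.sinh y = |y| * Real.cosh |y| / Real.sinh |y| := by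
        rcases abs_choice y with h | h
        · rw [h]
        · rw [h, Real.cosh_neg, Real.sinh_neg, neg_mul, neg_div_neg_eq]
      rw [key]
      exact aux_coth_bounds |y| (abs_pos.2 hy)
  -- the sphere is nonempty
  have : Nontrivial V := Module.nontrivial_of_finrank_pos (R := ℝ) (M := V) (by omega)
  obtain ⟨x0, hx0⟩ := exists_norm_eq V (zero_le_one (α := ℝ))
  have : Nonempty {Z : V // ‖Z‖ = 1} := ⟨⟨x0, hx0⟩⟩
  set l : ℝ := (Module.finrank ℝ V : ℝ)
  have hl1 : (1 : ℝ) ≤ l - 1 := by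
    have : (2 : ℝ) ≤ l := by simp only [l]; exact_mod_cast hl
    linarith
  set C : ℝ := ∑ α ∈ Δ, m α with hC
  have hC0 : 0 ≤ C := Finset.sum_nonneg fun α hα => (hm α hα).le
  set K : ℝ := C + (l - 1) with hK
  have hK0 : 0 < K := by positivity
  -- pointwise estimate on the sphere for r > 0
  have hmain : ∀ r : ℝ, 0 < r → |ηmin r - bmin| ≤ K / r := by
    intro r hr
    rw [hηmin r hr, hbmin]
    set f : {Z : V // ‖Z‖ = 1} → ℝ := fun Z => ∑ α ∈ Δ, m α * |α Z| with hf
    set g : {Z : V // ‖Z‖ = 1} → ℝ := fun Z =>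
      (1 / r) * ∑ α ∈ Δ, m α * G (r * α Z) + (l - 1) / r with hg
    have hf0 : ∀ Z, 0 ≤ f Z := fun Z =>
      Finset.sum_nonneg fun α hα => mul_nonneg (hm α hα).le (abs_nonneg _)
    have hdiff : ∀ Z, 0 ≤ g Z - f Z ∧ g Z - f Z ≤ K / r := by
      intro Z
      have hsplit : g Z - f Z =
          (1 / r) * ∑ α ∈ Δ, m α * (G (r * α Z) - |r * α Z|) + (l - 1) / r := by
        have hterm : ∀ α ∈ Δ, m α * G (r * α Z)
            = r * (m α * |α Z|) + m α * (G (r * α Z) - |r * α Z|) := by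
          intro α hα
          have : |r * α Z| = r * |α Z| := by rw [abs_mul, abs_of_pos hr]
          rw [this]; ring
        simp only [hg, hf]
        rw [Finset.sum_congr rfl hterm, Finset.sum_add_distrib, ← Finset.mul_sum]
        field_simp
        ring
      have hsb : ∀ α ∈ Δ, 0 ≤ m α * (G (r * α Z) - |r * α Z|) ∧
          m α * (G (r * α Z) - |r * α Z|) ≤ m α := by
        intro α hα
        have h1 := (hGb (r * α Z)).1
        have h2 := (hGb (r * α Z)).2
        constructor
        · exact mul_nonneg (hm α hα).le (by linarith)
        · calc m α * (G (r * α Z) - |r * α Z|) ≤ m α * 1 :=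
                mul_le_mul_of_nonneg_left (by linarith) (hm α hα).le
            _ = m α := mul_one _
      have hs0 : 0 ≤ ∑ α ∈ Δ, m α * (G (r * α Z) - |r * α Z|) :=
        Finset.sum_nonneg fun α hα => (hsb α hα).1
      have hsC : ∑ α ∈ Δ, m α * (G (r * α Z) - |r * α Z|) ≤ C :=
        Finset.sum_le_sum fun α hα => (hsb α hα).2
      constructor
      · rw [hsplit]; positivity
      · rw [hsplit, hK]
        have h1 : (1 / r) * ∑ α ∈ Δ, m α * (G (r * α Z) - |r * α Z|) ≤ C / r := by
          rw [div_eq_mul_inv C r, mul_comm C r⁻¹, one_div]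
          exact mul_le_mul_of_nonneg_left hsC (by positivity)
        have h2 : (C + (l - 1)) / r = C / r + (l - 1) / r := add_div _ _ _
        linarith
    have hg0 : ∀ Z, 0 ≤ g Z := fun Z => by linarith [hf0 Z, (hdiff Z).1]
    have habs : ∀ Z, |g Z - f Z| ≤ K / r := fun Z => by
      rw [abs_le]
      have hKr : 0 ≤ K / r := by positivity
      have h1 := (hdiff Z).1
      exact ⟨le_trans (neg_nonpos.mpr hKr) h1, (hdiff Z).2⟩
    exact aux_iInf_close f g hf0 hg0 (K / r) habs
  -- squeeze
  rw [tendsto_iff_dist_tendsto_zero]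
  refine squeeze_zero' (g := fun r : ℝ => K / r)
    (Eventually.of_forall fun r => dist_nonneg) ?_ ?_
  · filter_upwards [eventually_gt_atTop (0 : ℝ)] with r hr
    rw [Real.dist_eq]
    exact hmain r hr
  · exact Tendsto.div_atTop tendsto_const_nhds tendsto_id
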